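/- For all reals y > 1: y·(ln y)^2 - (y-1)^2 > -(1/3)·(y - ln y - 1)·(y·ln y - y + 1). Equivalently, λ(y) > -1/3 where λ(y) = (y - l(y)^2)/((l(y)-1)(y-l(y))) with l(y) = (y-1)/ln y. -/

import Mathlib

open Real

/-- Helper: a function vanishing at 1 with positive derivative on `Ioi 1` is positive there. -/
lemma pos_of_deriv_pos {f f' : ℝ → ℝ}
    (hc : ContinuousOn f (Set.Ici 1))
    (hd : ∀ x ∈ Set.Ioi (1:ℝ), HasDerivAt f (f' x) x)
    (hp : ∀ x ∈ Set.Ioi (1:ℝ), 0 < f' x)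
    (h1 : f 1 = 0) {y : ℝ} (hy : 1 < y) : 0 < f y := by
  have hmono : StrictMonoOn f (Set.Ici 1) := by
    apply strictMonoOn_of_deriv_pos (convex_Ici 1) hc
    intro x hx
    rw [interior_Ici] at hx
    rw [(hd x hx).deriv]
    exact hp x hx
  have := hmono (Set.self_mem_Ici) (Set.mem_Ici.2 hy.le) hy
  rwa [h1] at this

lemma H_pos {y : ℝ} (hy : 1 < y) : 0 < y ^ 2 - 1 - 2 * y * Real.log y := by
  apply pos_of_deriv_pos (f' := fun x => 2 * x - 2 * Real.log x - 2)
    (f := fun x => x ^ 2 - 1 - 2 * x * Real.log x)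
  · apply ContinuousOn.sub (by fun_prop)
    exact ContinuousOn.mul (by fun_prop)
      (Real.continuousOn_log.mono (fun x hx hx0 => by simp_all; linarith [hx]))
  · intro x hx
    have hx0 : (0:ℝ) < x := lt_trans one_pos hx
    have hl := Real.hasDerivAt_log hx0.ne'
    have h := ((hasDerivAt_pow 2 x).sub_const 1).sub
      (((hasDerivAt_id x).const_mul 2).mul hl)
    refine h.congr_deriv (Eq.symm ?_)
    simp only [id_eq, Pi.pow_apply]
    field_simp
    ring
  · intro x hx
    have hx0 : (0:ℝ) < x := lt_trans one_pos hx
    have := Real.log_lt_sub_one_of_pos hx0 (Set.mem_Ioi.1 hx).ne'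
    linarith
  · simp
  · exact hy

lemma F2_pos {y : ℝ} (hy : 1 < y) :
    0 < (4 / y + 2) * Real.log y + 4 / y + 1 / y ^ 2 - 5 := by
  apply pos_of_deriv_pos
    (f := fun x => (4 / x + 2) * Real.log x + 4 / x + 1 / x ^ 2 - 5)
    (f' := fun x => (x ^ 2 - 1 - 2 * x * Real.log x) * (2 / x ^ 3))
  · have hlog : ContinuousOn Real.log (Set.Ici (1:ℝ)) :=
      Real.continuousOn_log.mono (fun x hx hx0 => by simp_all; linarith [hx])
    have hne : ∀ x ∈ Set.Ici (1:ℝ), x ≠ 0 := fun x hx => by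
      have := Set.mem_Ici.1 hx; positivity
    have hne2 : ∀ x ∈ Set.Ici (1:ℝ), x ^ 2 ≠ 0 := fun x hx => by
      have := Set.mem_Ici.1 hx; positivity
    apply ContinuousOn.sub
    apply ContinuousOn.add
    apply ContinuousOn.add
    · exact ContinuousOn.mul (ContinuousOn.add (ContinuousOn.div (by fun_prop) (by fun_prop) hne) (by fun_prop)) hlog
    · exact ContinuousOn.div (by fun_prop) (by fun_prop) hne
    · exact ContinuousOn.div (by fun_prop) (by fun_prop) hne2
    · fun_prop
  · intro x hx
    have hx0 : (0:ℝ) < x := lt_trans one_pos hx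
    have hl := Real.hasDerivAt_log hx0.ne'
    have h4 : HasDerivAt (fun x : ℝ => 4 / x) (-(4 / x ^ 2)) x := by
      simp only [div_eq_mul_inv]
      have := (hasDerivAt_inv hx0.ne').const_mul (4:ℝ)
      refine this.congr_deriv (Eq.symm ?_)
      field_simp
    have h1x2 : HasDerivAt (fun x : ℝ => 1 / x ^ 2) (-(2 / x ^ 3)) x := by
      simp only [one_div]
      have := (hasDerivAt_pow 2 x).inv (by positivity : x ^ 2 ≠ 0)
      refine this.congr_deriv (Eq.symm ?_)
      field_simp
      ring
    have h := (((h4.add_const 2).mul hl).add h4 |>.add h1x2).sub_const 5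
    refine h.congr_deriv (Eq.symm ?_)
    field_simp
    ring
  · intro x hx
    have hx0 : (0:ℝ) < x := lt_trans one_pos hx
    have h1 := H_pos hx
    have h2 : (0:ℝ) < 2 / x ^ 3 := by positivity
    exact mul_pos h1 h2
  · norm_num
  · exact hy

lemma F1_pos {y : ℝ} (hy : 1 < y) :
    0 < 2 * Real.log y ^ 2 + (2 * y + 4) * Real.log y - 7 * y + 8 - 1 / y := by
  apply pos_of_deriv_pos
    (f := fun x => 2 * Real.log x ^ 2 + (2 * x + 4) * Real.log x - 7 * x + 8 - 1 / x)
    (f' := fun x => (4 / x + 2) * Real.log x + 4 / x + 1 / x ^ 2 - 5)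
  · have hlog : ContinuousOn Real.log (Set.Ici (1:ℝ)) :=
      Real.continuousOn_log.mono (fun x hx hx0 => by simp_all; linarith [hx])
    have hne : ∀ x ∈ Set.Ici (1:ℝ), x ≠ 0 := fun x hx => by
      have := Set.mem_Ici.1 hx; positivity
    apply ContinuousOn.sub
    apply ContinuousOn.add
    apply ContinuousOn.sub
    apply ContinuousOn.add
    · exact ContinuousOn.mul (by fun_prop) (hlog.pow 2)
    · exact ContinuousOn.mul (by fun_prop) hlog
    · fun_prop
    · fun_prop
    · exact ContinuousOn.div (by fun_prop) (by fun_prop) hne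
  · intro x hx
    have hx0 : (0:ℝ) < x := lt_trans one_pos hx
    have hl := Real.hasDerivAt_log hx0.ne'
    have h1x : HasDerivAt (fun x : ℝ => 1 / x) (-(1 / x ^ 2)) x := by
      simp only [one_div]
      have := hasDerivAt_inv hx0.ne'
      convert this using 1
    have h := ((((hl.pow 2).const_mul 2).add
      ((((hasDerivAt_id x).const_mul 2).add_const 4).mul hl)).sub
      ((hasDerivAt_id x).const_mul 7)).add_const 8 |>.sub h1x
    refine h.congr_deriv (Eq.symm ?_)
    simp only [id_eq, Pi.pow_apply]
    field_simp
    ring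
  · intro x hx
    exact F2_pos hx
  · norm_num
  · exact hy

lemma F_pos {y : ℝ} (hy : 1 < y) :
    0 < 2 * y * Real.log y ^ 2 + (y ^ 2 - 1) * Real.log y - 4 * (y - 1) ^ 2 := by
  apply pos_of_deriv_pos
    (f := fun x => 2 * x * Real.log x ^ 2 + (x ^ 2 - 1) * Real.log x - 4 * (x - 1) ^ 2)
    (f' := fun x => 2 * Real.log x ^ 2 + (2 * x + 4) * Real.log x - 7 * x + 8 - 1 / x)
  · have hlog : ContinuousOn Real.log (Set.Ici (1:ℝ)) :=
      Real.continuousOn_log.mono (fun x hx hx0 => by simp_all; linarith [hx])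
    apply ContinuousOn.sub
    apply ContinuousOn.add
    · exact ContinuousOn.mul (by fun_prop) (hlog.pow 2)
    · exact ContinuousOn.mul (by fun_prop) hlog
    · fun_prop
  · intro x hx
    have hx0 : (0:ℝ) < x := lt_trans one_pos hx
    have hl := Real.hasDerivAt_log hx0.ne'
    have h := ((((hasDerivAt_id x).const_mul 2).mul (hl.pow 2)).add
      (((hasDerivAt_pow 2 x).sub_const 1).mul hl)).sub
      ((((hasDerivAt_id x).sub_const 1).pow 2).const_mul 4)
    refine h.congr_deriv (Eq.symm ?_)
    simp only [id_eq, Pi.pow_apply]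
    field_simp
    ring
  · intro x hx
    exact F1_pos hx
  · norm_num
  · exact hy

theorem stmt10 (y : ℝ) (hy : 1 < y) :
    y * (Real.log y) ^ 2 - (y - 1) ^ 2 >
      -(1/3) * (y - Real.log y - 1) * (y * Real.log y - y + 1) := by
  have h := F_pos hy
  nlinarith [h]
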